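/- The multivariate Beta function satisfies B(a₁,…,a_{n+1}) := ∫_{Bₙ} x₁^{a₁−1} ⋯ xₙ^{aₙ−1} (1−Σᵢxᵢ)^{a_{n+1}−1} dx₁⋯dxₙ = ∏ᵢ₌₁^{n+1} Γ(aᵢ) / Γ(Σᵢ₌₁^{n+1} aᵢ), for all a₁,…,a_{n+1} > 0. -/

import Mathlib

open MeasureTheory
open scoped BigOperators ENNReal

open Set in
private lemma my_cpow_ofReal {x p : ℝ} (hx : 0 ≤ x) (hx1 : x ≤ 1) (q : ℝ) :
    (x:ℂ) ^ ((p:ℂ)-1) * (1 - (x:ℂ)) ^ ((q:ℂ)-1) = ((x ^ (p-1) * (1-x) ^ (q-1) : ℝ) : ℂ) := by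
  rw [Complex.ofReal_mul, Complex.ofReal_cpow hx, Complex.ofReal_cpow (by linarith : (0:ℝ) ≤ 1 - x)]
  push_cast
  ring_nf

open Set in
private lemma my_beta_intInt {p q : ℝ} (hp : 0 < p) (hq : 0 < q) :
    IntervalIntegrable (fun t : ℝ => t ^ (p-1) * (1 - t) ^ (q-1)) volume 0 1 := by
  have h := Complex.betaIntegral_convergent (u := p) (v := q) (by simpa using hp) (by simpa using hq)
  rw [intervalIntegrable_iff_integrableOn_Ioc_of_le (by norm_num)] at h ⊢
  have h2 : IntegrableOn (fun x : ℝ => ((x:ℂ) ^ ((p:ℂ)-1) * (1 - (x:ℂ)) ^ ((q:ℂ)-1)).re)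
      (Ioc 0 1) volume := h.re
  refine (integrableOn_congr_fun ?_ measurableSet_Ioc).mp h2
  intro x hx
  simp only [my_cpow_ofReal hx.1.le hx.2 q, Complex.ofReal_re]

open Set in
private lemma my_beta_integral {p q : ℝ} (hp : 0 < p) (hq : 0 < q) :
    ∫ t in (0:ℝ)..1, t ^ (p-1) * (1 - t) ^ (q-1)
      = Real.Gamma p * Real.Gamma q / Real.Gamma (p+q) := by
  have h := Complex.Gamma_mul_Gamma_eq_betaIntegral (s := p) (t := q)
    (by simpa using hp) (by simpa using hq)
  have hB : Complex.betaIntegral p q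
      = ((∫ t in (0:ℝ)..1, t ^ (p-1) * (1 - t) ^ (q-1) : ℝ) : ℂ) := by
    rw [Complex.betaIntegral, ← intervalIntegral.integral_ofReal]
    refine intervalIntegral.integral_congr fun x hx => ?_
    rw [uIcc_of_le (by norm_num)] at hx
    exact my_cpow_ofReal hx.1 hx.2 q
  rw [hB, ← Complex.ofReal_add, Complex.Gamma_ofReal, Complex.Gamma_ofReal, Complex.Gamma_ofReal,
    ← Complex.ofReal_mul, ← Complex.ofReal_mul] at h
  have h2 := Complex.ofReal_inj.mp h
  have hG : Real.Gamma (p+q) ≠ 0 := (Real.Gamma_pos_of_pos (by linarith)).ne'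
  field_simp
  linarith [h2]

open Set in
private lemma my_scaled_eqon {p q c : ℝ} (hc : 0 < c) :
    EqOn (fun u : ℝ => (c*u) ^ (p-1) * (c - c*u) ^ (q-1))
      (fun u : ℝ => c ^ (p-1) * c ^ (q-1) * (u ^ (p-1) * (1-u) ^ (q-1))) (uIcc 0 1) := by
  intro u hu
  rw [uIcc_of_le (by norm_num)] at hu
  have h1 : 0 ≤ u := hu.1
  have h2 : 0 ≤ 1 - u := by linarith [hu.2]
  simp only
  rw [show c - c*u = c * (1-u) by ring, Real.mul_rpow hc.le h1, Real.mul_rpow hc.le h2]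
  ring

open Set in
private lemma my_scaled_intInt {p q c : ℝ} (hp : 0 < p) (hq : 0 < q) (hc : 0 < c) :
    IntegrableOn (fun t : ℝ => t ^ (p-1) * (c - t) ^ (q-1)) (Ioo 0 c) volume := by
  have h0 := ((my_beta_intInt hp hq).comp_mul_left (c := c⁻¹)).const_mul (c ^ (p-1) * c ^ (q-1))
  rw [zero_div, show (1:ℝ) / c⁻¹ = c by field_simp,
    intervalIntegrable_iff_integrableOn_Ioc_of_le hc.le] at h0
  have h1 : IntegrableOn
      (fun x : ℝ => c ^ (p-1) * c ^ (q-1) * ((c⁻¹ * x) ^ (p-1) * (1 - c⁻¹ * x) ^ (q-1)))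
      (Ioo 0 c) volume := h0.mono_set Ioo_subset_Ioc_self
  refine (integrableOn_congr_fun ?_ measurableSet_Ioo).mp h1
  intro t ht
  have h2 : 0 ≤ c⁻¹ * t := by
    have := ht.1.le; positivity
  simp only
  rw [show (1:ℝ) - c⁻¹ * t = c⁻¹ * (c - t) by field_simp,
    Real.mul_rpow (by positivity) (by linarith [ht.2] : (0:ℝ) ≤ c - t),
    Real.mul_rpow (by positivity) ht.1.le,
    Real.inv_rpow hc.le, Real.inv_rpow hc.le]
  field_simp

open Set in
private lemma my_scaled_integral {p q c : ℝ} (hp : 0 < p) (hq : 0 < q) (hc : 0 < c) :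
    ∫ t in Ioo (0:ℝ) c, t ^ (p-1) * (c - t) ^ (q-1)
      = c ^ (p+q-1) * (Real.Gamma p * Real.Gamma q / Real.Gamma (p+q)) := by
  have key : (∫ t in (0:ℝ)..c, t ^ (p-1) * (c - t) ^ (q-1))
      = c ^ (p+q-1) * (Real.Gamma p * Real.Gamma q / Real.Gamma (p+q)) := by
    have h := intervalIntegral.smul_integral_comp_mul_left
      (f := fun t : ℝ => t ^ (p-1) * (c - t) ^ (q-1)) (a := 0) (b := 1) c
    rw [mul_zero, mul_one] at h
    rw [← h, intervalIntegral.integral_congr (my_scaled_eqon hc),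
      intervalIntegral.integral_const_mul, my_beta_integral hp hq, smul_eq_mul]
    have hpow : c * (c ^ (p-1) * c ^ (q-1)) = c ^ (p+q-1) := by
      rw [← Real.rpow_add hc]
      nth_rewrite 1 [show c = c ^ (1:ℝ) by rw [Real.rpow_one]]
      rw [← Real.rpow_add hc]
      ring_nf
    rw [show c * (c ^ (p-1) * c ^ (q-1) * (Real.Gamma p * Real.Gamma q / Real.Gamma (p+q)))
      = (c * (c ^ (p-1) * c ^ (q-1))) * (Real.Gamma p * Real.Gamma q / Real.Gamma (p+q)) by ring,
      hpow]
  rw [← key, intervalIntegral.integral_of_le hc.le, integral_Ioc_eq_integral_Ioo]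

open Set in
private lemma my_scaled_lintegral {p q c : ℝ} (hp : 0 < p) (hq : 0 < q) (hc : 0 < c) :
    ∫⁻ t in Ioo (0:ℝ) c, ENNReal.ofReal (t ^ (p-1) * (c - t) ^ (q-1))
      = ENNReal.ofReal (c ^ (p+q-1) * (Real.Gamma p * Real.Gamma q / Real.Gamma (p+q))) := by
  rw [← my_scaled_integral hp hq hc,
    ← ofReal_integral_eq_lintegral_ofReal (my_scaled_intInt hp hq hc) ?_]
  filter_upwards [ae_restrict_mem measurableSet_Ioo] with t ht
  have h1 : 0 ≤ t := ht.1.le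
  have h2 : (0:ℝ) ≤ c - t := by linarith [ht.2]
  positivity

private lemma my_meas_rpow (c : ℝ) : Measurable (fun x : ℝ => x ^ c) := by measurability

/-- The open standard simplex. -/
private def mySmplx (n : ℕ) : Set (Fin n → ℝ) :=
  {x : Fin n → ℝ | (∀ i, x i ∈ Set.Ioo (0:ℝ) 1) ∧ ∑ i, x i < 1}

private lemma my_measurableSet_smplx (n : ℕ) : MeasurableSet (mySmplx n) := by
  have : mySmplx n = (⋂ i, (fun x : Fin n → ℝ => x i) ⁻¹' Set.Ioo 0 1)
      ∩ {x : Fin n → ℝ | ∑ i, x i < 1} := by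
    ext x; simp [mySmplx, Set.mem_iInter]
  rw [this]
  exact (MeasurableSet.iInter fun i => (measurable_pi_apply i) measurableSet_Ioo).inter
    (measurableSet_lt (Finset.measurable_sum _ fun i _ => measurable_pi_apply i) measurable_const)

private lemma my_meas_integrand (n : ℕ) (a : Fin (n+1) → ℝ) :
    Measurable (fun x : Fin n → ℝ => ENNReal.ofReal
      ((∏ i : Fin n, x i ^ (a (Fin.castSucc i) - 1)) * (1 - ∑ i, x i) ^ (a (Fin.last n) - 1))) := by
  measurability

private lemma my_dirichlet (n : ℕ) : ∀ (a : Fin (n+1) → ℝ), (∀ i, 0 < a i) →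
    (∫⁻ x in mySmplx n, ENNReal.ofReal
      ((∏ i : Fin n, x i ^ (a (Fin.castSucc i) - 1)) *
        (1 - ∑ i, x i) ^ (a (Fin.last n) - 1)) ∂volume)
      = ENNReal.ofReal ((∏ i, Real.Gamma (a i)) / Real.Gamma (∑ i, a i)) := by
  induction n with
  | zero =>
    intro a ha
    have hS : mySmplx 0 = Set.univ := by
      ext x
      simp [mySmplx]
    rw [hS, Measure.restrict_univ, Fin.prod_univ_one, Fin.sum_univ_one,
      div_self (Real.Gamma_pos_of_pos (ha 0)).ne', ENNReal.ofReal_one]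
    simp only [Finset.univ_eq_empty, Finset.prod_empty, Finset.sum_empty, sub_zero,
      Real.one_rpow, one_mul, ENNReal.ofReal_one, lintegral_const]
    rw [show (volume : Measure (Fin 0 → ℝ)) Set.univ = 1 by
      rw [volume_pi, Measure.pi_univ]; simp]
  | succ n ih =>
    intro a ha
    set L : Fin (n+2) := Fin.last (n+1) with hL
    set b : Fin (n+1) → ℝ := Fin.snoc (fun i : Fin n => a (Fin.castSucc i.succ)) (a 0 + a L)
      with hb
    have hbpos : ∀ i, 0 < b i := by
      intro i
      induction i using Fin.lastCases with
      | last => rw [hb]; simp only [Fin.snoc_last]; exact add_pos (ha 0) (ha L)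
      | cast j => rw [hb]; simp only [Fin.snoc_castSucc]; exact ha _
    set β : ℝ := Real.Gamma (a 0) * Real.Gamma (a L) / Real.Gamma (a 0 + a L) with hβ
    have hβnn : 0 ≤ β := by
      rw [hβ]
      have g1 := Real.Gamma_pos_of_pos (ha 0)
      have g2 := Real.Gamma_pos_of_pos (ha L)
      have g3 := Real.Gamma_pos_of_pos (add_pos (ha 0) (ha L))
      positivity
    set g : (Fin (n+1) → ℝ) → ℝ≥0∞ := fun x => ENNReal.ofReal
      ((∏ i : Fin (n+1), x i ^ (a (Fin.castSucc i) - 1)) *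
        (1 - ∑ i, x i) ^ (a (Fin.last (n+1)) - 1)) with hg
    have hgmeas : Measurable g := my_meas_integrand (n+1) a
    have hGmeas : Measurable ((mySmplx (n+1)).indicator g) :=
      hgmeas.indicator (my_measurableSet_smplx (n+1))
    have hcons : Measurable (fun z : ℝ × (Fin n → ℝ) => (Fin.cons z.1 z.2 : Fin (n+1) → ℝ)) := by
      refine measurable_pi_iff.mpr fun i => ?_
      induction i using Fin.cases with
      | zero => simpa using measurable_fst
      | succ j => simp only [Fin.cons_succ]; exact (measurable_pi_apply j).comp measurable_snd
    have hmp := (volume_preserving_piFinSuccAbove (fun _ : Fin (n+1) => ℝ) 0).symm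
    have hinner : ∀ y : Fin n → ℝ,
        (∫⁻ t, (mySmplx (n+1)).indicator g (Fin.cons t y)) =
        (mySmplx n).indicator (fun y => ENNReal.ofReal β * ENNReal.ofReal
          ((∏ i : Fin n, y i ^ (b (Fin.castSucc i) - 1)) *
            (1 - ∑ i, y i) ^ (b (Fin.last n) - 1))) y := by
      intro y
      by_cases hy : y ∈ mySmplx n
      · have hs0 : (0:ℝ) ≤ ∑ i, y i := Finset.sum_nonneg fun i _ => (hy.1 i).1.le
        have hs1 : (∑ i, y i) < 1 := hy.2
        have hc : (0:ℝ) < 1 - ∑ i, y i := by linarith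
        set P : ℝ := ∏ i : Fin n, y i ^ (a (Fin.castSucc i.succ) - 1) with hP
        have hPnn : 0 ≤ P :=
          Finset.prod_nonneg fun i _ => Real.rpow_nonneg (hy.1 i).1.le _
        have hmem : ∀ t : ℝ, Fin.cons t y ∈ mySmplx (n+1) ↔ t ∈ Set.Ioo 0 (1 - ∑ i, y i) := by
          intro t
          constructor
          · rintro ⟨h1, h2⟩
            have h0 := h1 0
            rw [Fin.cons_zero] at h0
            rw [Fin.sum_univ_succ] at h2
            simp only [Fin.cons_zero, Fin.cons_succ] at h2
            exact ⟨h0.1, by linarith⟩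
          · rintro ⟨ht0, ht1⟩
            refine ⟨fun i => ?_, ?_⟩
            · induction i using Fin.cases with
              | zero => rw [Fin.cons_zero]; exact ⟨ht0, by linarith⟩
              | succ j => rw [Fin.cons_succ]; exact hy.1 j
            · rw [Fin.sum_univ_succ]
              simp only [Fin.cons_zero, Fin.cons_succ]
              linarith
        have hfun : (fun t => (mySmplx (n+1)).indicator g (Fin.cons t y)) =
            (Set.Ioo 0 (1 - ∑ i, y i)).indicator (fun t => ENNReal.ofReal
              (P * (t ^ (a 0 - 1) * ((1 - ∑ i, y i) - t) ^ (a L - 1)))) := by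
          funext t
          by_cases ht : t ∈ Set.Ioo 0 (1 - ∑ i, y i)
          · simp only [Set.indicator_of_mem ((hmem t).mpr ht), Set.indicator_of_mem ht, hg]
            congr 1
            rw [Fin.prod_univ_succ, Fin.sum_univ_succ]
            simp only [Fin.cons_zero, Fin.cons_succ, Fin.castSucc_zero]
            rw [show (1:ℝ) - (t + ∑ i, y i) = (1 - ∑ i, y i) - t by ring, ← hP, hL]
            ring
          · rw [Set.indicator_of_notMem (fun hmem' => ht ((hmem t).mp hmem')),
              Set.indicator_of_notMem ht]
        have hstep : (∫⁻ t, (mySmplx (n+1)).indicator g (Fin.cons t y)) =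
            ∫⁻ t, (Set.Ioo 0 (1 - ∑ i, y i)).indicator (fun t => ENNReal.ofReal
              (P * (t ^ (a 0 - 1) * ((1 - ∑ i, y i) - t) ^ (a L - 1)))) t :=
          lintegral_congr fun t => congrFun hfun t
        rw [hstep, lintegral_indicator measurableSet_Ioo _]
        have hcongr : ∀ t ∈ Set.Ioo (0:ℝ) (1 - ∑ i, y i),
            ENNReal.ofReal (P * (t ^ (a 0 - 1) * ((1 - ∑ i, y i) - t) ^ (a L - 1))) =
            ENNReal.ofReal P * ENNReal.ofReal
              (t ^ (a 0 - 1) * ((1 - ∑ i, y i) - t) ^ (a L - 1)) := by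
          intro t ht
          rw [ENNReal.ofReal_mul hPnn]
        rw [setLIntegral_congr_fun measurableSet_Ioo hcongr,
          lintegral_const_mul _ (show Measurable fun t : ℝ => ENNReal.ofReal
              (t ^ (a 0 - 1) * ((1 - ∑ i : Fin n, y i) - t) ^ (a L - 1)) from
            ENNReal.measurable_ofReal.comp ((my_meas_rpow _).mul
              ((my_meas_rpow _).comp (measurable_const.sub measurable_id)))),
          my_scaled_lintegral (ha 0) (ha L) hc]
        rw [Set.indicator_of_mem hy]
        simp only [hb, Fin.snoc_castSucc, Fin.snoc_last]
        rw [← ENNReal.ofReal_mul hPnn, ← ENNReal.ofReal_mul hβnn, ← hP]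
        congr 1
        rw [hβ]
        ring
      · rw [Set.indicator_of_notMem hy]
        have hz : ∀ t : ℝ, (mySmplx (n+1)).indicator g (Fin.cons t y) = 0 := by
          intro t
          refine Set.indicator_of_notMem ?_ _
          intro hmem
          apply hy
          constructor
          · intro i
            have := hmem.1 i.succ
            rwa [Fin.cons_succ] at this
          · have h0 := hmem.1 0
            rw [Fin.cons_zero] at h0
            have hs := hmem.2
            rw [Fin.sum_univ_succ] at hs
            simp only [Fin.cons_zero, Fin.cons_succ] at hs
            linarith [h0.1]
        simp only [hz]
        exact lintegral_zero
    -- main computation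
    calc
      ∫⁻ x in mySmplx (n+1), g x ∂volume
          = ∫⁻ x, (mySmplx (n+1)).indicator g x ∂volume := by
            rw [lintegral_indicator (my_measurableSet_smplx (n+1)) _]
      _ = ∫⁻ z : ℝ × (Fin n → ℝ), (mySmplx (n+1)).indicator g (Fin.cons z.1 z.2)
            ∂(volume.prod volume) := by
            rw [← Measure.volume_eq_prod, ← hmp.lintegral_comp hGmeas]
            congr 1
            funext z
            congr 1
            simp [MeasurableEquiv.piFinSuccAbove_symm_apply, Fin.insertNthEquiv,
              Fin.insertNth_zero]
      _ = ∫⁻ y, ∫⁻ t, (mySmplx (n+1)).indicator g (Fin.cons t y) ∂volume ∂volume := by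
            have haem : AEMeasurable
                (fun z : ℝ × (Fin n → ℝ) => (mySmplx (n+1)).indicator g (Fin.cons z.1 z.2))
                ((volume : Measure ℝ).prod (volume : Measure (Fin n → ℝ))) :=
              (hGmeas.comp hcons).aemeasurable
            rw [lintegral_prod_symm _ haem]
      _ = ∫⁻ y, (mySmplx n).indicator (fun y => ENNReal.ofReal β * ENNReal.ofReal
            ((∏ i : Fin n, y i ^ (b (Fin.castSucc i) - 1)) *
              (1 - ∑ i, y i) ^ (b (Fin.last n) - 1))) y ∂volume := lintegral_congr hinner
      _ = ENNReal.ofReal β * ∫⁻ y in mySmplx n, ENNReal.ofReal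
            ((∏ i : Fin n, y i ^ (b (Fin.castSucc i) - 1)) *
              (1 - ∑ i, y i) ^ (b (Fin.last n) - 1)) ∂volume := by
            rw [lintegral_indicator (my_measurableSet_smplx n) _,
              lintegral_const_mul _ (my_meas_integrand n b)]
      _ = ENNReal.ofReal β * ENNReal.ofReal ((∏ i, Real.Gamma (b i)) / Real.Gamma (∑ i, b i)) := by
            rw [ih b hbpos]
      _ = ENNReal.ofReal ((∏ i, Real.Gamma (a i)) / Real.Gamma (∑ i, a i)) := by
            rw [← ENNReal.ofReal_mul hβnn]
            congr 1
            have hsum : (∑ i, b i) = ∑ i, a i := by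
              rw [Fin.sum_univ_castSucc (f := b), Fin.sum_univ_succ (f := a)]
              simp only [hb, Fin.snoc_castSucc, Fin.snoc_last]
              rw [Fin.sum_univ_castSucc (f := fun i : Fin (n+1) => a i.succ)]
              simp only [Fin.succ_castSucc, Fin.succ_last, hL]
              ring
            have hprodb : (∏ i, Real.Gamma (b i)) =
                (∏ i : Fin n, Real.Gamma (a (Fin.castSucc i.succ))) *
                  Real.Gamma (a 0 + a L) := by
              rw [Fin.prod_univ_castSucc (f := fun i => Real.Gamma (b i))]
              simp only [hb, Fin.snoc_castSucc, Fin.snoc_last]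
            have hproda : (∏ i, Real.Gamma (a i)) =
                Real.Gamma (a 0) * ((∏ i : Fin n, Real.Gamma (a (Fin.castSucc i.succ))) *
                  Real.Gamma (a L)) := by
              rw [Fin.prod_univ_succ (f := fun i => Real.Gamma (a i)),
                Fin.prod_univ_castSucc (f := fun i : Fin (n+1) => Real.Gamma (a i.succ))]
              simp only [Fin.succ_castSucc, Fin.succ_last, hL]
            have h1 : Real.Gamma (a 0 + a L) ≠ 0 :=
              (Real.Gamma_pos_of_pos (add_pos (ha 0) (ha L))).ne'
            rw [hsum, hprodb, hproda, hβ, div_mul_div_comm,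
              show Real.Gamma (a 0) * Real.Gamma (a L) *
                  ((∏ i : Fin n, Real.Gamma (a i.succ.castSucc)) * Real.Gamma (a 0 + a L))
                = (Real.Gamma (a 0) * ((∏ i : Fin n, Real.Gamma (a i.succ.castSucc)) *
                    Real.Gamma (a L))) * Real.Gamma (a 0 + a L) by ring,
              show Real.Gamma (a 0 + a L) * Real.Gamma (∑ i, a i)
                = Real.Gamma (∑ i, a i) * Real.Gamma (a 0 + a L) by ring,
              mul_div_mul_right _ _ h1]

/-- The multivariate Beta function:
`∫_{Bₙ} x₁^{a₁−1}⋯xₙ^{aₙ−1}(1−Σxᵢ)^{a_{n+1}−1} dx = ∏ᵢ Γ(aᵢ)/Γ(Σᵢ aᵢ)`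
for all `a₁,…,a_{n+1} > 0`, where `Bₙ = {x ∈ (0,1)ⁿ : Σ xᵢ < 1}` is the open standard
simplex and `Γ` is the Euler Gamma function. -/
theorem stmt19 (n : ℕ) (a : Fin (n+1) → ℝ) (ha : ∀ i, 0 < a i) :
    ∫ x in {x : Fin n → ℝ | (∀ i, x i ∈ Set.Ioo (0:ℝ) 1) ∧ ∑ i, x i < 1},
        (∏ i : Fin n, x i ^ (a (Fin.castSucc i) - 1)) *
          (1 - ∑ i, x i) ^ (a (Fin.last n) - 1) ∂volume =
      (∏ i, Real.Gamma (a i)) / Real.Gamma (∑ i, a i) := by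
  have hset : {x : Fin n → ℝ | (∀ i, x i ∈ Set.Ioo (0:ℝ) 1) ∧ ∑ i, x i < 1} = mySmplx n := rfl
  rw [hset]
  have hmeasf : Measurable (fun x : Fin n → ℝ =>
      (∏ i : Fin n, x i ^ (a (Fin.castSucc i) - 1)) * (1 - ∑ i, x i) ^ (a (Fin.last n) - 1)) :=
    (Finset.measurable_prod _ fun i _ => (my_meas_rpow _).comp (measurable_pi_apply i)).mul
      ((my_meas_rpow _).comp (measurable_const.sub
        (Finset.measurable_sum _ fun i _ => measurable_pi_apply i)))
  have hae : 0 ≤ᵐ[volume.restrict (mySmplx n)] (fun x : Fin n → ℝ =>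
      (∏ i : Fin n, x i ^ (a (Fin.castSucc i) - 1)) * (1 - ∑ i, x i) ^ (a (Fin.last n) - 1)) := by
    filter_upwards [ae_restrict_mem (my_measurableSet_smplx n)] with x hx
    exact mul_nonneg (Finset.prod_nonneg fun i _ => Real.rpow_nonneg (hx.1 i).1.le _)
      (Real.rpow_nonneg (by linarith [hx.2]) _)
  rw [integral_eq_lintegral_of_nonneg_ae hae (hmeasf.aestronglyMeasurable.restrict),
    my_dirichlet n a ha, ENNReal.toReal_ofReal]
  exact div_nonneg (Finset.prod_nonneg fun i _ => (Real.Gamma_pos_of_pos (ha i)).le)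
    (Real.Gamma_pos_of_pos (Finset.sum_pos (fun i _ => ha i) Finset.univ_nonempty)).le
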